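/- Let D be a disjunctive database such that no disjunction of D subsumes another (i.e., D = reduction(D)). If D' is any disjunctive database with the same set of minimal models as D, then D ⊆ D' and every disjunction in D' \ D is subsumed by some disjunction in D. -/
import Mathlib


variable {F : Type*} [DecidableEq F]

/-- M is a model of the disjunctive database D: it meets every disjunction. -/
def IsModel (D : Finset (Finset F)) (M : Finset F) : Prop :=
  ∀ d ∈ D, ∃ t ∈ d, t ∈ M

/-- M is a minimal model of D. -/
def IsMinModel (D : Finset (Finset F)) (M : Finset F) : Prop :=
  IsModel D M ∧ ∀ M' ⊂ M, ¬ IsModel D M'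

/-- reduction removes every disjunction properly containing another disjunction of D. -/
def reduction (D : Finset (Finset F)) : Finset (Finset F) :=
  D.filter (fun d => ∀ d' ∈ D, ¬ d' ⊂ d)

lemma exists_min_submodel (D : Finset (Finset F)) (M : Finset F) (h : IsModel D M) :
    ∃ M₀ ⊆ M, IsMinModel D M₀ := by
  induction M using Finset.strongInduction with
  | _ M ih =>
    by_cases hm : ∀ M' ⊂ M, ¬ IsModel D M'
    · exact ⟨M, subset_rfl, h, hm⟩
    · push_neg at hm
      obtain ⟨M', hM', hmod⟩ := hm
      obtain ⟨M₀, hsub, hmin⟩ := ih M' hM' hmod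
      exact ⟨M₀, hsub.trans hM'.subset, hmin⟩

lemma implied_of_hits (D : Finset (Finset F)) (c : Finset F)
    (h : ∀ M, IsMinModel D M → ∃ t ∈ c, t ∈ M) : ∃ d ∈ D, d ⊆ c := by
  by_contra hc
  push_neg at hc
  have hmod : IsModel D (D.biUnion (fun d => d \ c)) := by
    intro d hd
    obtain ⟨t, ht, htc⟩ := Finset.not_subset.mp (hc d hd)
    exact ⟨t, ht, Finset.mem_biUnion.mpr ⟨d, hd, Finset.mem_sdiff.mpr ⟨ht, htc⟩⟩⟩
  obtain ⟨M₀, hsub, hmin⟩ := exists_min_submodel D _ hmod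
  obtain ⟨t, htc, htM⟩ := h M₀ hmin
  obtain ⟨d, -, htd⟩ := Finset.mem_biUnion.mp (hsub htM)
  exact (Finset.mem_sdiff.mp htd).2 htc

theorem stmt1 (D D' : Finset (Finset F))
    (hD : ∀ d ∈ D, d.Nonempty) (hD' : ∀ d ∈ D', d.Nonempty)
    (hred : ∀ d ∈ D, ∀ d'' ∈ D, ¬ d'' ⊂ d)
    (hsame : ∀ M : Finset F, IsMinModel D' M ↔ IsMinModel D M) :
    D ⊆ D' ∧ ∀ d' ∈ D', d' ∉ D → ∃ d ∈ D, d ⊂ d' := by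
  have key : ∀ c : Finset F, (∃ d ∈ D, d ⊆ c) ↔ (∃ d' ∈ D', d' ⊆ c) := by
    intro c
    constructor
    · rintro ⟨d, hd, hdc⟩
      refine implied_of_hits D' c (fun M hM => ?_)
      obtain ⟨t, htd, htM⟩ := ((hsame M).mp hM).1 d hd
      exact ⟨t, hdc htd, htM⟩
    · rintro ⟨d, hd, hdc⟩
      refine implied_of_hits D c (fun M hM => ?_)
      obtain ⟨t, htd, htM⟩ := ((hsame M).mpr hM).1 d hd
      exact ⟨t, hdc htd, htM⟩
  have hback : ∀ d' ∈ D', ∃ d ∈ D, d ⊆ d' := fun d' hd' =>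
    (key d').mpr ⟨d', hd', subset_rfl⟩
  constructor
  · intro d hd
    obtain ⟨d', hd', hsub⟩ := (key d).mp ⟨d, hd, subset_rfl⟩
    obtain ⟨d₀, hd₀, hsub₀⟩ := hback d' hd'
    have heq : d₀ = d := by
      by_contra hne
      exact hred d hd d₀ hd₀ ⟨hsub₀.trans hsub, fun h => hne (subset_antisymm (hsub₀.trans hsub) h)⟩
    have : d' = d := subset_antisymm hsub (heq ▸ hsub₀)
    exact this ▸ hd'
  · intro d' hd' hnot
    obtain ⟨d, hd, hsub⟩ := hback d' hd'
    refine ⟨d, hd, hsub, fun h => hnot ?_⟩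
    have : d = d' := subset_antisymm hsub h
    exact this ▸ hd
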